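/- Let G be a connected weighted graph with distinct edge weights and T its unique minimum spanning tree. If a spanning tree T' of G is obtained from any spanning tree by repeatedly applying the improvement step — replace a tree edge f by a non-tree edge e whenever f lies on the fundamental cycle of e and w(f) > w(e) — until no improvement step applies, then T' = T. -/

import Mathlib

open SimpleGraph

variable {V : Type*}

/-- `T` is a spanning tree of `G`: a subgraph of `G` (on the same vertex set)
that is a tree. -/
def IsSpanningTree (G T : SimpleGraph V) : Prop :=
  T ≤ G ∧ T.IsTree

/-- The total weight of (the edges of) a graph. -/
noncomputable def totalWeight (T : SimpleGraph V) (w : Sym2 V → ℝ) : ℝ :=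
  ∑ᶠ e ∈ T.edgeSet, w e

/-- `T` is a minimum spanning tree of `G` with respect to the weights `w`. -/
def IsMST (G T : SimpleGraph V) (w : Sym2 V → ℝ) : Prop :=
  IsSpanningTree G T ∧
    ∀ T' : SimpleGraph V, IsSpanningTree G T' → totalWeight T w ≤ totalWeight T' w

private lemma reach_of_walk_del {G : SimpleGraph V} {a b : V}
    (h : (G \ fromEdgeSet {s(a, b)}).Reachable a b) :
    ∀ {u v : V}, G.Walk u v → (G \ fromEdgeSet {s(a, b)}).Reachable u v := by
  intro u v p
  induction p with
  | nil => exact Reachable.refl _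
  | @cons c d v hadj q ih =>
    refine Reachable.trans ?_ ih
    by_cases he : s(c, d) = s(a, b)
    · rw [Sym2.eq_iff] at he
      rcases he with ⟨rfl, rfl⟩ | ⟨rfl, rfl⟩
      · exact h
      · exact h.symm
    · exact Adj.reachable (by simp [sdiff_adj, fromEdgeSet_adj, hadj, he])

private lemma exists_tree_le [Finite V] :
    ∀ (n : ℕ) (G : SimpleGraph V), G.edgeSet.ncard ≤ n → G.Connected →
      ∃ S, S ≤ G ∧ S.IsTree := by
  intro n
  induction n with
  | zero =>
    intro G hcard hconn
    refine ⟨G, le_refl _, hconn, ?_⟩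
    have : G.edgeSet = ∅ := by
      rw [← Set.ncard_eq_zero (Set.toFinite _)]; omega
    have hbot : G = ⊥ := by rwa [← edgeSet_eq_empty]
    subst hbot
    intro v c hc
    cases c with
    | nil => exact hc.ne_nil rfl
    | cons h p => simp at h
  | succ n ih =>
    intro G hcard hconn
    by_cases hac : G.IsAcyclic
    · exact ⟨G, le_refl _, hconn, hac⟩
    · rw [isAcyclic_iff_forall_adj_isBridge] at hac
      push_neg at hac
      obtain ⟨a, b, hadj, hbr⟩ := hac
      have hre : (G \ fromEdgeSet {s(a, b)}).Reachable a b := by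
        by_contra hre
        exact hbr (isBridge_iff.mpr hre)
      set G' := G \ fromEdgeSet {s(a, b)} with hG'
      have hconn' : G'.Connected := by
        haveI := hconn.nonempty
        exact Connected.mk fun u v => reach_of_walk_del hre (hconn u v).some
      have hedge : G'.edgeSet = G.edgeSet \ {s(a, b)} := by
        rw [hG', edgeSet_sdiff, edgeSet_fromEdgeSet]
        congr 1
        ext g
        simp only [Set.mem_diff, Set.mem_singleton_iff, Set.mem_setOf_eq, and_iff_left_iff_imp]
        rintro rfl
        simp [hadj.ne]
      have hlt : G'.edgeSet.ncard ≤ n := by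
        have := Set.ncard_diff_singleton_add_one (G.mem_edgeSet.mpr hadj) (Set.toFinite _)
        rw [hedge]; omega
      obtain ⟨S, hS, hSt⟩ := ih G' hlt hconn'
      exact ⟨S, hS.trans sdiff_le, hSt⟩

private lemma reach_endpoint_dichotomy {T : SimpleGraph V} {u v : V}
    (hconn : T.Connected) (z : V) :
    (T \ fromEdgeSet {s(u, v)}).Reachable u z ∨ (T \ fromEdgeSet {s(u, v)}).Reachable v z := by
  have key : ∀ {a z : V}, T.Walk a z →
      ((T \ fromEdgeSet {s(u, v)}).Reachable u a ∨ (T \ fromEdgeSet {s(u, v)}).Reachable v a) →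
      ((T \ fromEdgeSet {s(u, v)}).Reachable u z ∨ (T \ fromEdgeSet {s(u, v)}).Reachable v z) := by
    intro a z p
    induction p with
    | nil => exact id
    | @cons a c z hadj q ih =>
      intro h
      apply ih
      by_cases he : s(a, c) = s(u, v)
      · rw [Sym2.eq_iff] at he
        rcases he with ⟨rfl, rfl⟩ | ⟨rfl, rfl⟩
        · exact Or.inr (Reachable.refl _)
        · exact Or.inl (Reachable.refl _)
      · have hadj' : (T \ fromEdgeSet {s(u, v)}).Adj a c := by
          simp [sdiff_adj, fromEdgeSet_adj, hadj, he]
        rcases h with h | h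
        · exact Or.inl (h.trans hadj'.reachable)
        · exact Or.inr (h.trans hadj'.reachable)
  exact key (hconn u z).some (Or.inl (Reachable.refl _))

private lemma exists_crossing_edge {H : SimpleGraph V} (c : V → Prop) :
    ∀ {u v : V} (p : H.Walk u v), c u → ¬ c v →
      ∃ x y, s(x, y) ∈ p.edges ∧ c x ∧ ¬ c y := by
  intro u v p
  induction p with
  | nil => intro h1 h2; exact absurd h1 h2
  | @cons a b v hadj q ih =>
    intro h1 h2
    by_cases hb : c b
    · obtain ⟨x, y, hmem, hx, hy⟩ := ih hb h2
      exact ⟨x, y, by rw [Walk.edges_cons]; exact List.mem_cons_of_mem _ hmem, hx, hy⟩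
    · exact ⟨a, b, by rw [Walk.edges_cons]; exact List.mem_cons_self, h1, hb⟩

/-- Let `T` be the unique minimum spanning tree of a connected graph `G` with
pairwise distinct positive edge weights. If `T'` is a spanning tree of `G` to
which no improvement step applies — i.e. there is no non-tree edge `e` and tree
edge `f` on the fundamental cycle of `e` with `w f > w e` — then `T' = T`. -/
theorem improvement_stable_is_mst [Fintype V]
    (G : SimpleGraph V) (w : Sym2 V → ℝ) (hG : G.Connected)
    (hpos : ∀ e ∈ G.edgeSet, 0 < w e) (hdist : Set.InjOn w G.edgeSet)
    (T : SimpleGraph V) (hT : IsMST G T w)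
    (T' : SimpleGraph V) (hT' : IsSpanningTree G T')
    (hstable : ∀ u v, G.Adj u v → ¬ T'.Adj u v →
        ∀ p : T'.Walk u v, p.IsPath → ∀ f ∈ p.edges, ¬ w s(u, v) < w f) :
    T' = T := by
  classical
  by_contra hne
  have hTtree := hT.1.2
  have hT'tree := hT'.2
  -- find an edge of `T` not in `T'`
  have hex : ∃ e, e ∈ T.edgeSet ∧ e ∉ T'.edgeSet := by
    by_contra h
    push_neg at h
    have h1 := hTtree.card_edgeFinset
    have h2 := hT'tree.card_edgeFinset
    have hsub : T.edgeFinset ⊆ T'.edgeFinset := by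
      intro g hg
      rw [mem_edgeFinset] at hg ⊢
      exact h g hg
    have heq := Finset.eq_of_subset_of_card_le hsub (by omega)
    apply hne
    apply edgeSet_injective
    rw [← coe_edgeFinset, ← coe_edgeFinset, heq]
  obtain ⟨e, heT, heT'⟩ := hex
  revert heT heT'
  induction e using Sym2.ind with | _ u v => ?_
  intro heT heT'
  have hGuv : G.Adj u v := hT.1.1 (T.mem_edgeSet.mp heT)
  have hT'uv : ¬ T'.Adj u v := fun h => heT' (T'.mem_edgeSet.mpr h)
  obtain ⟨p0⟩ := hT'tree.isConnected u v
  obtain ⟨p, hp⟩ := p0.toPath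
  have hbr : ¬ (T \ fromEdgeSet {s(u, v)}).Reachable u v :=
    (isBridge_iff.mp
      ((isAcyclic_iff_forall_adj_isBridge.mp hTtree.IsAcyclic) (T.mem_edgeSet.mp heT)))
  obtain ⟨x, y, hmem, hx, hy⟩ := exists_crossing_edge
      (fun z => (T \ fromEdgeSet {s(u, v)}).Reachable u z) p (Reachable.refl _) hbr
  have hfT' : s(x, y) ∈ T'.edgeSet := p.edges_subset_edgeSet hmem
  have hfG : s(x, y) ∈ G.edgeSet := edgeSet_mono hT'.1 hfT'
  have hne2 : s(x, y) ≠ s(u, v) := fun h => heT' (h ▸ hfT')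
  have hflt : w s(x, y) < w s(u, v) := by
    have hle : ¬ w s(u, v) < w s(x, y) := hstable u v hGuv hT'uv p hp _ hmem
    exact lt_of_le_of_ne (not_lt.mp hle)
      (fun h => hne2 (hdist hfG (edgeSet_mono hT.1.1 heT) h))
  have hxy_ne : x ≠ y := fun h => hy (h ▸ hx)
  have hvy : (T \ fromEdgeSet {s(u, v)}).Reachable v y :=
    (reach_endpoint_dichotomy hTtree.isConnected y).resolve_left hy
  have hfnotT : s(x, y) ∉ T.edgeSet := by
    intro hmemT
    have hadj' : (T \ fromEdgeSet {s(u, v)}).Adj x y := by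
      simp [sdiff_adj, fromEdgeSet_adj, T.mem_edgeSet.mp hmemT, hne2]
    exact hy (hx.trans hadj'.reachable)
  set H : SimpleGraph V := (T \ fromEdgeSet {s(u, v)}) ⊔ fromEdgeSet {s(x, y)} with hH
  have hHG : H ≤ G := by
    apply sup_le (le_trans sdiff_le hT.1.1)
    rw [← edgeSet_subset_edgeSet, edgeSet_fromEdgeSet]
    rintro g ⟨hg, -⟩
    rw [Set.mem_singleton_iff] at hg
    exact hg ▸ hfG
  have hle1 : (T \ fromEdgeSet {s(u, v)}) ≤ H := le_sup_left
  have hxyH : H.Adj x y := (sup_adj _ _ _ _).mpr (Or.inr ((fromEdgeSet_adj _).mpr ⟨rfl, hxy_ne⟩))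
  have huvH : H.Reachable u v :=
    ((hx.mono hle1).trans hxyH.reachable).trans (hvy.mono hle1).symm
  have hHreach : ∀ z, H.Reachable u z := fun z => by
    rcases reach_endpoint_dichotomy hTtree.isConnected z with h | h
    · exact h.mono hle1
    · exact huvH.trans (h.mono hle1)
  haveI : Nonempty V := hG.nonempty
  have hHconn : H.Connected := Connected.mk fun a b => (hHreach a).symm.trans (hHreach b)
  have hHedge : H.edgeSet = (T.edgeSet \ {s(u, v)}) ∪ {s(x, y)} := by
    rw [hH, edgeSet_sup, edgeSet_sdiff, edgeSet_fromEdgeSet, edgeSet_fromEdgeSet]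
    congr 1
    · congr 1
      ext g
      simp only [Set.mem_diff, Set.mem_singleton_iff, Set.mem_setOf_eq, and_iff_left_iff_imp]
      rintro rfl
      simp [hGuv.ne]
    · ext g
      simp only [Set.mem_diff, Set.mem_singleton_iff, Set.mem_setOf_eq, and_iff_left_iff_imp]
      rintro rfl
      simp [hxy_ne]
  have hsplit : totalWeight T w = (∑ᶠ g ∈ T.edgeSet \ {s(u, v)}, w g) + w s(u, v) := by
    show (∑ᶠ g ∈ T.edgeSet, w g) = _
    conv_lhs => rw [← Set.diff_union_of_subset (Set.singleton_subset_iff.mpr heT)]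
    rw [finsum_mem_union (Set.disjoint_singleton_right.mpr (by simp))
      (Set.toFinite _) (Set.toFinite _), finsum_mem_singleton]
  have hHw : totalWeight H w = (∑ᶠ g ∈ T.edgeSet \ {s(u, v)}, w g) + w s(x, y) := by
    show (∑ᶠ g ∈ H.edgeSet, w g) = _
    rw [hHedge, finsum_mem_union
      (Set.disjoint_singleton_right.mpr (fun h => hfnotT h.1))
      (Set.toFinite _) (Set.toFinite _), finsum_mem_singleton]
  obtain ⟨S, hSH, hStree⟩ := exists_tree_le (H.edgeSet.ncard) H le_rfl hHconn
  have hmono : totalWeight S w ≤ totalWeight H w := by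
    show (∑ᶠ g ∈ S.edgeSet, w g) ≤ (∑ᶠ g ∈ H.edgeSet, w g)
    rw [← Set.Finite.coe_toFinset (Set.toFinite S.edgeSet),
      ← Set.Finite.coe_toFinset (Set.toFinite H.edgeSet),
      finsum_mem_coe_finset, finsum_mem_coe_finset]
    apply Finset.sum_le_sum_of_subset_of_nonneg
    · exact Set.Finite.toFinset_subset_toFinset.mpr (edgeSet_mono hSH)
    · intro g hg _
      rw [Set.Finite.mem_toFinset] at hg
      exact (hpos g (edgeSet_mono hHG hg)).le
  have hTle : totalWeight T w ≤ totalWeight S w := hT.2 S ⟨hSH.trans hHG, hStree⟩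
  have : totalWeight T w ≤ totalWeight H w := hTle.trans hmono
  rw [hsplit, hHw] at this
  linarith
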